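/- Let H be a finite group, R a normal subgroup of H, and L a subgroup of H such that LR = H; set Q = L ∩ R. Then the value μ(L, H) of the Möbius function of the lattice of subgroups of H is equal to the value μ(Q, R) of the Möbius function of the poset of subgroups of R that are normalized by L (ordered by inclusion). -/

import Mathlib

open scoped Pointwise

/-- Let `H` be a finite group, `R` a normal subgroup of `H`, and `L` a subgroup of `H` with
`LR = H`; set `Q = L ⊓ R`. Then the value `μ₁ L H` of the Möbius function of the lattice of
subgroups of `H` equals the value `μ₂ Q R` of the Möbius function of the poset of subgroups
of `R` normalized by `L`. Here the Möbius functions are characterized by `μ x x = 1` and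
`∑_{x ≤ z ≤ y} μ z y = 0` for `x < y`. -/
theorem stmt3 (H : Type*) [Group H] [Fintype H] (R L : Subgroup H) [R.Normal]
    (hLR : (L : Set H) * (R : Set H) = Set.univ)
    (μ₁ : Subgroup H → Subgroup H → ℤ)
    (hμ₁refl : ∀ X : Subgroup H, μ₁ X X = 1)
    (hμ₁sum : ∀ X Y : Subgroup H, X < Y →
      (∑ᶠ Z ∈ {Z : Subgroup H | X ≤ Z ∧ Z ≤ Y}, μ₁ Z Y) = 0)
    (μ₂ : {Y : Subgroup H // Y ≤ R ∧ L ≤ Subgroup.normalizer (Y : Set H)} →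
          {Y : Subgroup H // Y ≤ R ∧ L ≤ Subgroup.normalizer (Y : Set H)} → ℤ)
    (hμ₂refl : ∀ X, μ₂ X X = 1)
    (hμ₂sum : ∀ X Y, X < Y →
      (∑ᶠ Z ∈ {Z : {Y : Subgroup H // Y ≤ R ∧ L ≤ Subgroup.normalizer (Y : Set H)} | X ≤ Z ∧ Z ≤ Y},
        μ₂ Z Y) = 0)
    (hQmem : L ⊓ R ≤ R ∧ L ≤ Subgroup.normalizer ((L ⊓ R : Subgroup H) : Set H))
    (hRmem : R ≤ R ∧ L ≤ Subgroup.normalizer (R : Set H)) :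
    μ₁ L ⊤ = μ₂ ⟨L ⊓ R, hQmem⟩ ⟨R, hRmem⟩ := by
  classical
  have hRn : R.Normal := ‹_›
  -- decompose elements of H as l * r
  have hdecomp : ∀ x : H, ∃ l ∈ L, ∃ r ∈ R, x = l * r := by
    intro x
    have hx : x ∈ (L : Set H) * (R : Set H) := by rw [hLR]; trivial
    obtain ⟨l, hl, r, hr, rfl⟩ := hx
    exact ⟨l, hl, r, hr, rfl⟩
  have hsup : L ⊔ R = (⊤ : Subgroup H) := by
    rw [eq_top_iff]
    intro x _
    obtain ⟨l, hl, r, hr, rfl⟩ := hdecomp x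
    exact mul_mem ((le_sup_left : L ≤ L ⊔ R) hl) ((le_sup_right : R ≤ L ⊔ R) hr)
  -- conjugation facts
  have conj_mem_iff : ∀ (S : Subgroup H) (l : H), l ∈ S → ∀ x : H,
      x ∈ S ↔ l * x * l⁻¹ ∈ S := by
    intro S l hl x
    constructor
    · intro h; exact mul_mem (mul_mem hl h) (inv_mem hl)
    · intro h
      have h2 : l⁻¹ * (l * x * l⁻¹) * l ∈ S := mul_mem (mul_mem (inv_mem hl) h) hl
      have h3 : l⁻¹ * (l * x * l⁻¹) * l = x := by group
      rwa [h3] at h2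
  have conjR : ∀ (l x : H), x ∈ R ↔ l * x * l⁻¹ ∈ R := by
    intro l x
    constructor
    · intro h; exact hRn.conj_mem x h l
    · intro h
      have h2 := hRn.conj_mem _ h l⁻¹
      have h3 : l⁻¹ * (l * x * l⁻¹) * l⁻¹⁻¹ = x := by group
      rwa [h3] at h2
  -- the map from subgroups to P
  have hnorm : ∀ Z : Subgroup H, L ≤ Subgroup.normalizer (((L ⊔ Z) ⊓ R : Subgroup H) : Set H) := by
    intro Z l hl
    rw [Subgroup.mem_normalizer_iff]
    intro x
    simp only [Subgroup.mem_inf]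
    constructor
    · rintro ⟨h1, h2⟩
      exact ⟨(conj_mem_iff (L ⊔ Z) l ((le_sup_left : L ≤ L ⊔ Z) hl) x).1 h1,
        (conjR l x).1 h2⟩
    · rintro ⟨h1, h2⟩
      exact ⟨(conj_mem_iff (L ⊔ Z) l ((le_sup_left : L ≤ L ⊔ Z) hl) x).2 h1,
        (conjR l x).2 h2⟩
  set e : Subgroup H → {Y : Subgroup H // Y ≤ R ∧ L ≤ Subgroup.normalizer (Y : Set H)} := fun Z => ⟨(L ⊔ Z) ⊓ R, inf_le_right, hnorm Z⟩ with he
  -- recover K from e K when L ≤ K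
  have key1 : ∀ K : Subgroup H, L ≤ K → L ⊔ (K ⊓ R) = K := by
    intro K hLK
    refine le_antisymm (sup_le hLK inf_le_left) ?_
    intro k hk
    obtain ⟨l, hl, r, hr, rfl⟩ := hdecomp k
    have hrK : r ∈ K := by
      have := mul_mem (inv_mem (hLK hl)) hk
      rwa [inv_mul_cancel_left] at this
    exact mul_mem ((le_sup_left : L ≤ L ⊔ (K ⊓ R)) hl)
      ((le_sup_right : K ⊓ R ≤ L ⊔ (K ⊓ R)) ⟨hrK, hr⟩)
  have eval : ∀ K : Subgroup H, L ≤ K → (e K).1 = K ⊓ R := by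
    intro K hLK
    simp only [he]
    rw [sup_eq_right.2 hLK]
  -- every element of L ⊔ Y is a product l * y when L normalizes Y
  have keymul : ∀ Y : Subgroup H, L ≤ Subgroup.normalizer (Y : Set H) → ∀ x ∈ L ⊔ Y,
      ∃ l ∈ L, ∃ y ∈ Y, x = l * y := by
    intro Y hLN x hx
    rw [Subgroup.sup_eq_closure_mul] at hx
    induction hx using Subgroup.closure_induction'' with
    | one => exact ⟨1, one_mem _, 1, one_mem _, (mul_one 1).symm⟩
    | mem z hz =>
      obtain ⟨l, hl, y, hy, rfl⟩ := hz
      exact ⟨l, hl, y, hy, rfl⟩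
    | inv_mem z hz =>
      obtain ⟨l, hl, y, hy, rfl⟩ := hz
      refine ⟨l⁻¹, inv_mem hl, l * y⁻¹ * l⁻¹, ?_, by group⟩
      exact (Subgroup.mem_normalizer_iff.1 (hLN hl) y⁻¹).1 (inv_mem hy)
    | mul a b ha hb pa pb =>
      obtain ⟨l, hl, y, hy, rfl⟩ := pa
      obtain ⟨l', hl', y', hy', rfl⟩ := pb
      refine ⟨l * l', mul_mem hl hl', (l'⁻¹ * y * l'⁻¹⁻¹) * y', mul_mem ?_ hy', by group⟩
      exact (Subgroup.mem_normalizer_iff.1 (hLN (inv_mem hl')) y).1 hy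
  -- recover Y from L ⊔ Y
  have key2 : ∀ Y : Subgroup H, Y ≤ R → L ≤ Subgroup.normalizer (Y : Set H) → L ⊓ R ≤ Y →
      (L ⊔ Y) ⊓ R = Y := by
    intro Y hYR hLN hQY
    refine le_antisymm ?_ (le_inf le_sup_right hYR)
    rintro x ⟨hx1, hx2⟩
    obtain ⟨l, hl, y, hy, rfl⟩ := keymul Y hLN x hx1
    have hlR : l ∈ R := by
      have : (l * y) * y⁻¹ ∈ R := mul_mem hx2 (inv_mem (hYR hy))
      rwa [mul_inv_cancel_right] at this
    exact mul_mem (hQY ⟨hl, hlR⟩) hy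
  -- strict inequality at the top
  have hQle : ∀ K : Subgroup H, L ≤ K → L ⊓ R ≤ (e K).1 := by
    intro K hLK
    rw [eval K hLK]
    exact inf_le_inf_right R hLK
  have hRtop : e ⊤ = ⟨R, hRmem⟩ := by
    apply Subtype.ext
    rw [eval ⊤ le_top, top_inf_eq]
  -- main induction
  have step : ∀ K : Subgroup H, (∀ Z : Subgroup H, Z > K →
      (L ≤ Z → μ₁ Z ⊤ = μ₂ (e Z) ⟨R, hRmem⟩)) →
      (L ≤ K → μ₁ K ⊤ = μ₂ (e K) ⟨R, hRmem⟩) := by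
    intro K IH hLK
    by_cases hKtop : K = ⊤
    · subst hKtop
      rw [hRtop, hμ₁refl, hμ₂refl]
    · have hlt : K < ⊤ := lt_of_le_of_ne le_top hKtop
      have heK : (e K).1 = K ⊓ R := eval K hLK
      have heKlt : e K < ⟨R, hRmem⟩ := by
        refine lt_of_le_of_ne (Subtype.coe_le_coe.1 ((e K).2.1)) ?_
        intro hcon
        have : K ⊓ R = R := by rw [← heK, hcon]
        have hRK : R ≤ K := by rw [← this]; exact inf_le_left
        exact hKtop (top_le_iff.1 (hsup ▸ sup_le hLK hRK))
      -- first sum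
      have h1 := hμ₁sum K ⊤ hlt
      have hs1 : {Z : Subgroup H | K ≤ Z ∧ Z ≤ ⊤} = insert K (Set.Ioi K) := by
        rw [Set.Ioi_insert]
        ext Z
        simp [Set.mem_Ici, le_top]
      rw [hs1, finsum_mem_insert (f := fun Z => μ₁ Z ⊤) (a := K) (s := Set.Ioi K)
        (fun h => lt_irrefl K h) (Set.toFinite _)] at h1
      -- second sum
      have h2 := hμ₂sum (e K) ⟨R, hRmem⟩ heKlt
      have hs2 : {Z : {Y : Subgroup H // Y ≤ R ∧ L ≤ Subgroup.normalizer (Y : Set H)} | e K ≤ Z ∧ Z ≤ ⟨R, hRmem⟩} = insert (e K) (Set.Ioi (e K)) := by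
        rw [Set.Ioi_insert]
        ext Z
        simp only [Set.mem_setOf_eq, Set.mem_Ici, and_iff_left_iff_imp]
        exact fun _ => Subtype.coe_le_coe.1 Z.2.1
      rw [hs2, finsum_mem_insert (f := fun Z => μ₂ Z ⟨R, hRmem⟩) (a := e K)
        (s := Set.Ioi (e K)) (fun h => lt_irrefl (e K) h) (Set.toFinite _)] at h2
      -- the two tails agree via the bijection e
      have hbij : Set.BijOn e (Set.Ioi K) (Set.Ioi (e K)) := by
        refine ⟨?_, ?_, ?_⟩
        · intro Z hZ
          have hLZ : L ≤ Z := hLK.trans (le_of_lt hZ)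
          have hle : e K ≤ e Z := by
            rw [← Subtype.coe_le_coe, heK, eval Z hLZ]
            exact inf_le_inf_right R (le_of_lt hZ)
          refine lt_of_le_of_ne hle ?_
          intro hcon
          have : K = Z := by
            rw [← key1 K hLK, ← key1 Z hLZ, ← heK, ← eval Z hLZ, hcon]
          exact ne_of_lt hZ this
        · intro Z hZ Z' hZ' hZZ'
          have hLZ : L ≤ Z := hLK.trans (le_of_lt hZ)
          have hLZ' : L ≤ Z' := hLK.trans (le_of_lt hZ')
          rw [← key1 Z hLZ, ← key1 Z' hLZ', ← eval Z hLZ, ← eval Z' hLZ', hZZ']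
        · intro W hW
          have hQW : L ⊓ R ≤ W.1 := (hQle K hLK).trans
            (Subtype.coe_le_coe.2 (le_of_lt hW))
          have hval : (e (L ⊔ W.1)).1 = W.1 := by
            have : L ⊔ (L ⊔ W.1) = L ⊔ W.1 := by rw [← sup_assoc, sup_idem]
            simp only [he]
            rw [this]
            exact key2 W.1 W.2.1 W.2.2 hQW
          have heW : e (L ⊔ W.1) = W := Subtype.ext hval
          refine ⟨L ⊔ W.1, ?_, heW⟩
          have hKle : K ≤ L ⊔ W.1 := by
            rw [← key1 K hLK]
            refine sup_le le_sup_left ?_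
            exact le_trans (by rw [← heK]; exact Subtype.coe_le_coe.2 (le_of_lt hW))
              le_sup_right
          refine lt_of_le_of_ne hKle ?_
          intro hcon
          have hEq : e K = W := by rw [hcon, heW]
          rw [hEq] at hW
          exact lt_irrefl W hW
      have htails : (∑ᶠ Z ∈ Set.Ioi K, μ₁ Z ⊤) =
          ∑ᶠ W ∈ Set.Ioi (e K), μ₂ W ⟨R, hRmem⟩ := by
        refine finsum_mem_eq_of_bijOn e hbij ?_
        intro Z hZ
        exact IH Z hZ (hLK.trans (le_of_lt hZ))
      rw [htails] at h1
      linarith [h1, h2]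
  have main : ∀ K : Subgroup H, L ≤ K → μ₁ K ⊤ = μ₂ (e K) ⟨R, hRmem⟩ := fun K =>
    (Finite.to_wellFoundedGT (α := Subgroup H)).wf.induction
      (C := fun K => L ≤ K → μ₁ K ⊤ = μ₂ (e K) ⟨R, hRmem⟩) K step
  have heL : e L = ⟨L ⊓ R, hQmem⟩ := Subtype.ext (by rw [eval L le_rfl])
  rw [main L le_rfl, heL]
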